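/- Let a finite DTMDP with uniformisation rate q > 0, time bound t ≥ 0 and reward structure (c, f) be given, with max_s c(s) > 0, and let ε > 0. If k ∈ ℕ satisfies Σ_{n=0}^{k} ψ_{qt}(n) > qt − ε·q/(2·max_s c(s)) and ψ_{qt}(k)·max_s f(s) < ε/2, then for every counting randomised (CR) scheduler σ and every initial state s0, the tail of the value series is bounded: Σ_{i=k+1}^{∞} [ φ_{qt}(i)·Σ_s p_i^σ(s)·f(s) + ψ_{qt}(i)·Σ_s p_i^σ(s)·c(s)/q ] < ε. -/

import Mathlib

open scoped BigOperators

namespace TR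

variable {S A : Type} [Fintype S] [Fintype A] [DecidableEq S] [DecidableEq A]

/-- Poisson probabilities `φ_λ(i) = λ^i/i! · e^{−λ}`. -/
noncomputable def phi (lam : ℝ) (i : ℕ) : ℝ :=
  lam ^ i / (Nat.factorial i : ℝ) * Real.exp (-lam)

/-- `ψ_λ(i) = 1 − Σ_{j=0}^{i} φ_λ(j)`. -/
noncomputable def psi (lam : ℝ) (i : ℕ) : ℝ :=
  1 - ∑ j ∈ Finset.range (i + 1), phi lam j

/-- Action `a` is enabled in state `s`. -/
def Enabled (P : S → A → S → ℝ) (s : S) (a : A) : Prop :=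
  ∑ s', P s a s' = 1

/-- `P` is the transition function of a finite DTMDP. -/
def IsDTMDP (P : S → A → S → ℝ) : Prop :=
  (∀ s a s', 0 ≤ P s a s') ∧
  (∀ s a, (∑ s', P s a s') = 0 ∨ (∑ s', P s a s') = 1) ∧
  (∀ s, ∃ a, Enabled P s a)

/-- History-dependent randomised scheduler.  A history is encoded as a pair of
a list of (state, action) pairs (most recent first) and the current state. -/
def IsHR (P : S → A → S → ℝ) (sch : List (S × A) × S → A → ℝ) : Prop :=
  (∀ h a, 0 ≤ sch h a) ∧ (∀ h, ∑ a, sch h a = 1) ∧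
  (∀ h a, 0 < sch h a → Enabled P h.2 a)

/-- Probability of the path recorded in the given history (of length `n`,
starting at `s0`) under the HR scheduler `sch`. -/
noncomputable def hrHistProb (P : S → A → S → ℝ) (sch : List (S × A) × S → A → ℝ)
    (s0 : S) : ℕ → List (S × A) × S → ℝ
  | 0, h => if h.1 = [] ∧ h.2 = s0 then 1 else 0
  | _ + 1, ([], _) => 0
  | n + 1, ((s, a) :: rest, s') =>
      hrHistProb P sch s0 n (rest, s) * sch (rest, s) a * P s a s'

/-- Transient probability `tprob^σ(s0, n, s)`: total probability of all paths of
length `n` from `s0` ending in `s`. -/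
noncomputable def hrProb (P : S → A → S → ℝ) (sch : List (S × A) × S → A → ℝ)
    (s0 : S) (n : ℕ) (s : S) : ℝ :=
  ∑' l : List (S × A), hrHistProb P sch s0 n (l, s)

/-- Counting randomised scheduler. -/
def IsCR (P : S → A → S → ℝ) (sch : S → ℕ → A → ℝ) : Prop :=
  (∀ s n a, 0 ≤ sch s n a) ∧ (∀ s n, ∑ a, sch s n a = 1) ∧
  (∀ s n a, 0 < sch s n a → Enabled P s a)

/-- Transient distribution of a CR scheduler. -/
noncomputable def crProb (P : S → A → S → ℝ) (sch : S → ℕ → A → ℝ) (s0 : S) :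
    ℕ → S → ℝ
  | 0 => fun s => if s = s0 then 1 else 0
  | n + 1 => fun s' => ∑ s, crProb P sch s0 n s * ∑ a, sch s n a * P s a s'

/-- Counting deterministic scheduler. -/
def IsCD (P : S → A → S → ℝ) (d : S → ℕ → A) : Prop :=
  ∀ s n, Enabled P s (d s n)

/-- Transient distribution of a CD scheduler. -/
noncomputable def cdProb (P : S → A → S → ℝ) (d : S → ℕ → A) (s0 : S) :
    ℕ → S → ℝ
  | 0 => fun s => if s = s0 then 1 else 0
  | n + 1 => fun s' => ∑ s, cdProb P d s0 n s * P s (d s n) s'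

/-- The value `V = Σ_i [ φ_{qt}(i)·Σ_s p_i(s)·f(s) + ψ_{qt}(i)·Σ_s p_i(s)·c(s)/q ]`
of transient distributions `p` w.r.t. uniformisation rate `q`, time bound `t`
and rewards `(c, f)`. -/
noncomputable def value (q t : ℝ) (c f : S → ℝ) (p : ℕ → S → ℝ) : ℝ :=
  ∑' i : ℕ, (phi (q * t) i * ∑ s, p i s * f s
    + psi (q * t) i * ∑ s, p i s * (c s / q))

/-- Value-iteration vectors of a CR scheduler: `crVI … k j` is `q_{k+1-j}`,
i.e. `crVI … k 0 = q_{k+1} ≡ 0` and `crVI … k (k+1) = q_0`. -/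
noncomputable def crVI (P : S → A → S → ℝ) (sch : S → ℕ → A → ℝ)
    (q t : ℝ) (c f : S → ℝ) (k : ℕ) : ℕ → S → ℝ
  | 0 => fun _ => 0
  | j + 1 => fun s =>
      (∑ a, sch s (k - j) a * ∑ s', P s a s' * crVI P sch q t c f k j s')
      + phi (q * t) (k - j) * f s + psi (q * t) (k - j) * (c s / q)

/-- Maximising value-iteration vectors: `maxVI … k j` is `q'_{k+1-j}`,
i.e. `maxVI … k 0 = q'_{k+1} ≡ 0` and `maxVI … k (k+1) = q'_0`. -/
noncomputable def maxVI (P : S → A → S → ℝ)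
    (q t : ℝ) (c f : S → ℝ) (k : ℕ) : ℕ → S → ℝ
  | 0 => fun _ => 0
  | j + 1 => fun s =>
      sSup {x : ℝ | ∃ a, Enabled P s a ∧
        x = ∑ s', P s a s' * maxVI P q t c f k j s'}
      + phi (q * t) (k - j) * f s + psi (q * t) (k - j) * (c s / q)

/-- Maximum of a real-valued function on a finite nonempty type. -/
noncomputable def maxOf [Nonempty S] (g : S → ℝ) : ℝ :=
  Finset.univ.sup' Finset.univ_nonempty g

/-- `k` is `ε`-sufficient: `Σ_{n=0}^{k} ψ_{qt}(n) > qt − ε·q/(2·max_s c(s))`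
(dropped if `max_s c(s) = 0`) and `ψ_{qt}(k)·max_s f(s) < ε/2`. -/
def EpsSufficient [Nonempty S] (q t : ℝ) (c f : S → ℝ) (ε : ℝ) (k : ℕ) : Prop :=
  (maxOf c = 0 ∨
    (∑ n ∈ Finset.range (k + 1), psi (q * t) n) > q * t - ε * q / (2 * maxOf c)) ∧
  psi (q * t) k * maxOf f < ε / 2

/-- `n`-step transition probabilities (matrix powers) of a stochastic matrix. -/
noncomputable def matPow (P : S → S → ℝ) : ℕ → S → S → ℝ
  | 0 => fun s s' => if s = s' then 1 else 0
  | n + 1 => fun s s' => ∑ s'', matPow P n s s'' * P s'' s'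

/-- `part` is a partition of the finite state set `S`. -/
def IsPartition (part : Finset (Finset S)) : Prop :=
  (∀ z ∈ part, z.Nonempty) ∧ (∀ s : S, ∃ z ∈ part, s ∈ z) ∧
  (∀ z ∈ part, ∀ z' ∈ part, z ≠ z' → Disjoint z z')

/-- Abstraction DTMDP of a stochastic matrix w.r.t. a partition: states are
blocks, actions are concrete states, `P̄(z, s, z') = Σ_{s' ∈ z'} P(s,s')` if
`s ∈ z` and `0` otherwise. -/
noncomputable def abst (P : S → S → ℝ) (part : Finset (Finset S)) :
    {z // z ∈ part} → S → {z // z ∈ part} → ℝ :=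
  fun z s z' => if s ∈ z.1 then ∑ s' ∈ z'.1, P s s' else 0


section Aux

lemma summable_phi (lam : ℝ) : Summable (phi lam) := by
  exact (Real.summable_pow_div_factorial lam).mul_right (Real.exp (-lam))

lemma tsum_phi (lam : ℝ) : ∑' i, phi lam i = 1 := by
  have h : ∑' i : ℕ, lam ^ i / (Nat.factorial i : ℝ) = Real.exp lam := by
    rw [Real.exp_eq_exp_ℝ, NormedSpace.exp_eq_tsum_div]
  calc ∑' i, phi lam i = (∑' i : ℕ, lam ^ i / (Nat.factorial i : ℝ)) * Real.exp (-lam) := by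
        rw [← tsum_mul_right]; rfl
    _ = 1 := by rw [h, ← Real.exp_add]; simp

lemma phi_nonneg {lam : ℝ} (h : 0 ≤ lam) (i : ℕ) : 0 ≤ phi lam i :=
  mul_nonneg (div_nonneg (pow_nonneg h i) (Nat.cast_nonneg _)) (Real.exp_pos _).le

lemma psi_eq_tsum (lam : ℝ) (n : ℕ) : psi lam n = ∑' i, phi lam (i + (n + 1)) := by
  have h := Summable.sum_add_tsum_nat_add (n+1) (summable_phi lam)
  rw [tsum_phi] at h
  rw [psi]; linarith

lemma psi_nonneg {lam : ℝ} (h : 0 ≤ lam) (n : ℕ) : 0 ≤ psi lam n := by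
  rw [psi_eq_tsum]
  exact tsum_nonneg fun i => phi_nonneg h _

lemma phi_succ_eq (lam : ℝ) (j : ℕ) :
    ((j : ℝ) + 1) * phi lam (j + 1) = lam * phi lam j := by
  have hf : ((Nat.factorial j : ℕ) : ℝ) ≠ 0 := Nat.cast_ne_zero.2 j.factorial_ne_zero
  have hj : ((j : ℝ) + 1) ≠ 0 := by positivity
  simp only [phi, Nat.factorial_succ, pow_succ]
  push_cast
  field_simp

lemma summable_mul_phi (lam : ℝ) : Summable (fun j : ℕ => (j : ℝ) * phi lam j) := by
  rw [← summable_nat_add_iff 1]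
  have : (fun j : ℕ => ((j + 1 : ℕ) : ℝ) * phi lam (j + 1))
      = fun j => lam * phi lam j := by
    funext j; push_cast; exact phi_succ_eq lam j
  exact this ▸ (summable_phi lam).mul_left lam

lemma tsum_mul_phi (lam : ℝ) : ∑' j : ℕ, (j : ℝ) * phi lam j = lam := by
  rw [Summable.tsum_eq_zero_add (summable_mul_phi lam)]
  have : (fun j : ℕ => ((j + 1 : ℕ) : ℝ) * phi lam (j + 1))
      = fun j => lam * phi lam j := by
    funext j; push_cast; exact phi_succ_eq lam j
  push_cast
  calc (0:ℝ) * phi lam 0 + ∑' j : ℕ, ((j:ℝ) + 1) * phi lam (j + 1)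
      = ∑' j : ℕ, lam * phi lam j := by
        rw [zero_mul, zero_add]
        exact tsum_congr fun j => phi_succ_eq lam j
    _ = lam := by rw [tsum_mul_left, tsum_phi, mul_one]

lemma sum_psi_eq (lam : ℝ) (N : ℕ) :
    ∑ n ∈ Finset.range N, psi lam n
      = (∑ j ∈ Finset.range N, (j : ℝ) * phi lam j)
        + (N : ℝ) * ∑' i, phi lam (i + N) := by
  induction N with
  | zero => simp
  | succ N ih =>
    have hshift : (∑' i, phi lam (i + N))
        = phi lam N + ∑' i, phi lam (i + (N + 1)) := by
      rw [Summable.tsum_eq_zero_add ((summable_nat_add_iff N).2 (summable_phi lam))]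
      simp only [zero_add]
      congr 1
      exact tsum_congr fun i => by ring_nf
    rw [Finset.sum_range_succ, ih, psi_eq_tsum, Finset.sum_range_succ, hshift]
    push_cast
    ring

lemma sum_psi_le {lam : ℝ} (h : 0 ≤ lam) (N : ℕ) :
    ∑ n ∈ Finset.range N, psi lam n ≤ lam := by
  have hs : Summable (fun i : ℕ => ((i + N : ℕ) : ℝ) * phi lam (i + N)) :=
    (summable_nat_add_iff N).2 (summable_mul_phi lam)
  have h1 : (N : ℝ) * ∑' i, phi lam (i + N)
      ≤ ∑' i : ℕ, ((i + N : ℕ) : ℝ) * phi lam (i + N) := by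
    rw [← tsum_mul_left]
    refine Summable.tsum_le_tsum (fun i => ?_)
      (((summable_nat_add_iff N).2 (summable_phi lam)).mul_left _) hs
    have : (N : ℝ) ≤ ((i + N : ℕ) : ℝ) := by push_cast; linarith [Nat.cast_nonneg (α := ℝ) i]
    exact mul_le_mul_of_nonneg_right this (phi_nonneg h _)
  have h2 := Summable.sum_add_tsum_nat_add N (summable_mul_phi lam)
  rw [tsum_mul_phi] at h2
  rw [sum_psi_eq]
  linarith

lemma summable_psi {lam : ℝ} (h : 0 ≤ lam) : Summable (psi lam) :=
  summable_of_sum_range_le (psi_nonneg h) (sum_psi_le h)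

lemma tsum_psi_le {lam : ℝ} (h : 0 ≤ lam) : ∑' n, psi lam n ≤ lam :=
  Real.tsum_le_of_sum_range_le (psi_nonneg h) (sum_psi_le h)

variable {S A : Type} [Fintype S] [Fintype A] [DecidableEq S] [DecidableEq A]

lemma crProb_nonneg (P : S → A → S → ℝ) (hP : IsDTMDP P) (sch : S → ℕ → A → ℝ)
    (hsch : IsCR P sch) (s0 : S) : ∀ n s, 0 ≤ crProb P sch s0 n s := by
  intro n
  induction n with
  | zero => intro s; simp only [crProb]; split <;> norm_num
  | succ n ih =>
    intro s'
    simp only [crProb]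
    refine Finset.sum_nonneg fun s _ => mul_nonneg (ih s) (Finset.sum_nonneg fun a _ => ?_)
    exact mul_nonneg (hsch.1 s n a) (hP.1 s a s')

lemma sum_crProb (P : S → A → S → ℝ) (hP : IsDTMDP P) (sch : S → ℕ → A → ℝ)
    (hsch : IsCR P sch) (s0 : S) : ∀ n, ∑ s, crProb P sch s0 n s = 1 := by
  intro n
  induction n with
  | zero => simp [crProb]
  | succ n ih =>
    simp only [crProb]
    rw [Finset.sum_comm]
    have key : ∀ s a, sch s n a * ∑ s', P s a s' = sch s n a := by
      intro s a
      rcases lt_or_eq_of_le (hsch.1 s n a) with hpos | h0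
      · rw [hsch.2.2 s n a hpos, mul_one]
      · rw [← h0, zero_mul]
    calc ∑ s, ∑ s', crProb P sch s0 n s * ∑ a, sch s n a * P s a s'
        = ∑ s, crProb P sch s0 n s := by
          refine Finset.sum_congr rfl fun s _ => ?_
          rw [← Finset.mul_sum]
          have : ∑ s', ∑ a, sch s n a * P s a s' = 1 := by
            rw [Finset.sum_comm]
            calc ∑ a, ∑ s', sch s n a * P s a s'
                = ∑ a, sch s n a := by
                  refine Finset.sum_congr rfl fun a _ => ?_
                  rw [← Finset.mul_sum, key]
              _ = 1 := hsch.2.1 s n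
          rw [this, mul_one]
      _ = 1 := ih

end Aux

/-- tail bound for the value series of any CR scheduler when `k`
satisfies both ε-conditions (with `max_s c(s) > 0`). -/
theorem stmt8 {S A : Type} [Fintype S] [Nonempty S] [Fintype A]
    [DecidableEq S] [DecidableEq A]
    (P : S → A → S → ℝ) (hP : IsDTMDP P)
    (q t : ℝ) (hq : 0 < q) (ht : 0 ≤ t)
    (c f : S → ℝ) (hc : ∀ s, 0 ≤ c s) (hf : ∀ s, 0 ≤ f s)
    (hcmax : 0 < maxOf c) (ε : ℝ) (hε : 0 < ε) (k : ℕ)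
    (hk1 : (∑ n ∈ Finset.range (k + 1), psi (q * t) n) >
      q * t - ε * q / (2 * maxOf c))
    (hk2 : psi (q * t) k * maxOf f < ε / 2)
    (sch : S → ℕ → A → ℝ) (hsch : IsCR P sch) (s0 : S) :
    (∑' i : ℕ, (phi (q * t) (i + (k + 1)) * ∑ s, crProb P sch s0 (i + (k + 1)) s * f s
      + psi (q * t) (i + (k + 1)) *
          ∑ s, crProb P sch s0 (i + (k + 1)) s * (c s / q))) < ε := by
  have hlam : 0 ≤ q * t := mul_nonneg hq.le ht
  have hpnn := crProb_nonneg P hP sch hsch s0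
  have hpsum := sum_crProb P hP sch hsch s0
  have hMcq : 0 < maxOf c / q := div_pos hcmax hq
  have hA : ∀ i, ∑ s, crProb P sch s0 i s * f s ≤ maxOf f := by
    intro i
    calc ∑ s, crProb P sch s0 i s * f s
        ≤ ∑ s, crProb P sch s0 i s * maxOf f :=
          Finset.sum_le_sum fun s _ => mul_le_mul_of_nonneg_left
            (Finset.le_sup' f (Finset.mem_univ s)) (hpnn i s)
      _ = maxOf f := by rw [← Finset.sum_mul, hpsum, one_mul]
  have hB : ∀ i, ∑ s, crProb P sch s0 i s * (c s / q) ≤ maxOf c / q := by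
    intro i
    calc ∑ s, crProb P sch s0 i s * (c s / q)
        ≤ ∑ s, crProb P sch s0 i s * (maxOf c / q) :=
          Finset.sum_le_sum fun s _ => mul_le_mul_of_nonneg_left
            (div_le_div_of_nonneg_right (Finset.le_sup' c (Finset.mem_univ s)) hq.le) (hpnn i s)
      _ = maxOf c / q := by rw [← Finset.sum_mul, hpsum, one_mul]
  have hA0 : ∀ i, 0 ≤ ∑ s, crProb P sch s0 i s * f s := fun i =>
    Finset.sum_nonneg fun s _ => mul_nonneg (hpnn i s) (hf s)
  have hB0 : ∀ i, 0 ≤ ∑ s, crProb P sch s0 i s * (c s / q) := fun i =>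
    Finset.sum_nonneg fun s _ => mul_nonneg (hpnn i s) (div_nonneg (hc s) hq.le)
  have hsphi : Summable (fun i : ℕ => phi (q*t) (i+(k+1))) :=
    (summable_nat_add_iff (k+1)).2 (summable_phi _)
  have hspsi : Summable (fun i : ℕ => psi (q*t) (i+(k+1))) :=
    (summable_nat_add_iff (k+1)).2 (summable_psi hlam)
  have hm : Summable (fun i : ℕ =>
      phi (q*t) (i+(k+1)) * maxOf f + psi (q*t) (i+(k+1)) * (maxOf c / q)) :=
    (hsphi.mul_right _).add (hspsi.mul_right _)
  have hgm : ∀ i, (phi (q*t) (i+(k+1)) * ∑ s, crProb P sch s0 (i+(k+1)) s * f s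
      + psi (q*t) (i+(k+1)) * ∑ s, crProb P sch s0 (i+(k+1)) s * (c s / q))
      ≤ phi (q*t) (i+(k+1)) * maxOf f + psi (q*t) (i+(k+1)) * (maxOf c / q) :=
    fun i => add_le_add (mul_le_mul_of_nonneg_left (hA _) (phi_nonneg hlam _))
      (mul_le_mul_of_nonneg_left (hB _) (psi_nonneg hlam _))
  have hg0 : ∀ i, 0 ≤ (phi (q*t) (i+(k+1)) * ∑ s, crProb P sch s0 (i+(k+1)) s * f s
      + psi (q*t) (i+(k+1)) * ∑ s, crProb P sch s0 (i+(k+1)) s * (c s / q)) :=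
    fun i => add_nonneg (mul_nonneg (phi_nonneg hlam _) (hA0 _))
      (mul_nonneg (psi_nonneg hlam _) (hB0 _))
  have hg : Summable (fun i : ℕ =>
      phi (q*t) (i+(k+1)) * ∑ s, crProb P sch s0 (i+(k+1)) s * f s
      + psi (q*t) (i+(k+1)) * ∑ s, crProb P sch s0 (i+(k+1)) s * (c s / q)) :=
    Summable.of_nonneg_of_le hg0 hgm hm
  have htm : (∑' i : ℕ, (phi (q*t) (i+(k+1)) * maxOf f + psi (q*t) (i+(k+1)) * (maxOf c / q)))
      = psi (q*t) k * maxOf f + (∑' i : ℕ, psi (q*t) (i+(k+1))) * (maxOf c / q) := by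
    rw [Summable.tsum_add (hsphi.mul_right _) (hspsi.mul_right _), tsum_mul_right, tsum_mul_right,
      ← psi_eq_tsum]
  have htail : (∑' i : ℕ, psi (q*t) (i+(k+1))) < ε * q / (2 * maxOf c) := by
    have h2 := Summable.sum_add_tsum_nat_add (k+1) (summable_psi hlam)
    have h3 := tsum_psi_le hlam
    linarith
  have hfin2 : (∑' i : ℕ, psi (q*t) (i+(k+1))) * (maxOf c / q) < ε / 2 := by
    have h4 := mul_lt_mul_of_pos_right htail hMcq
    have heq : ε * q / (2 * maxOf c) * (maxOf c / q) = ε / 2 := by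
      field_simp
    linarith [heq ▸ h4]
  calc (∑' i : ℕ, (phi (q * t) (i + (k + 1)) * ∑ s, crProb P sch s0 (i + (k + 1)) s * f s
      + psi (q * t) (i + (k + 1)) *
          ∑ s, crProb P sch s0 (i + (k + 1)) s * (c s / q)))
      ≤ ∑' i : ℕ, (phi (q*t) (i+(k+1)) * maxOf f + psi (q*t) (i+(k+1)) * (maxOf c / q)) :=
        Summable.tsum_le_tsum hgm hg hm
    _ = psi (q*t) k * maxOf f + (∑' i : ℕ, psi (q*t) (i+(k+1))) * (maxOf c / q) := htm
    _ < ε/2 + ε/2 := add_lt_add hk2 hfin2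
    _ = ε := by ring


end TR
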